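/- Let K be a number field and let W be a subgroup of U_K of rank 1, meaning: W contains an element u of infinite multiplicative order, and for every w ∈ W there exist integers m ≠ 0 and n with w^m = u^n. Then R_{K,W} = ℤ, i.e. R_{K,W} equals the image of ℤ in O_K. -/

import Mathlib

noncomputable section

open NumberField

set_option synthInstance.maxHeartbeats 1000000
set_option maxHeartbeats 1000000


lemma key_nat {R : Type*} [CommRing R] (α : Rˣ) (k : ℕ) :
    ∃ w : R, ((α : R)) ^ k - 1 = (k : R) * ((α : R) - 1) + ((α : R) - 1) ^ 2 * w := by
  induction k with
  | zero => exact ⟨0, by simp⟩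
  | succ k ih =>
    obtain ⟨w, hw⟩ := ih
    refine ⟨(k : R) + (α : R) * w, ?_⟩
    push_cast
    linear_combination (α : R) * hw

lemma key_int {R : Type*} [CommRing R] (α : Rˣ) (m : ℤ) :
    ∃ w : R, ((α ^ m : Rˣ) : R) - 1 = (m : R) * ((α : R) - 1) + ((α : R) - 1) ^ 2 * w := by
  rcases le_or_gt 0 m with h | h
  · obtain ⟨k, rfl⟩ := Int.eq_ofNat_of_zero_le h
    obtain ⟨w, hw⟩ := key_nat α k
    refine ⟨w, ?_⟩
    rw [zpow_natCast, Units.val_pow_eq_pow_val]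
    push_cast
    exact hw
  · obtain ⟨k, hk⟩ : ∃ k : ℕ, m = -(k : ℤ) := ⟨m.natAbs, by omega⟩
    subst hk
    obtain ⟨w, hw⟩ := key_nat α⁻¹ k
    set a : R := (α : R) with ha
    set b : R := ((α⁻¹ : Rˣ) : R) with hb
    have hβ : a * b = 1 := by
      rw [ha, hb, ← Units.val_mul, mul_inv_cancel, Units.val_one]
    refine ⟨(k : R) * b + b ^ 2 * w, ?_⟩
    have h2 : ((α ^ (-(k:ℤ)) : Rˣ) : R) = b ^ k := by
      rw [zpow_neg, zpow_natCast, ← inv_pow, Units.val_pow_eq_pow_val]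
    rw [h2]
    push_cast
    linear_combination hw + ((k : R) * (2 - a) + w * (2 * b - 1 - a * b)) * hβ

lemma exists_int (K : Type) [Field K] [NumberField K] {y : 𝓞 K} {a b : ℤ}
    (hb : b ≠ 0) (h : (b : 𝓞 K) * y = (a : 𝓞 K)) : ∃ c : ℤ, (c : 𝓞 K) = y := by
  have hK : (algebraMap (𝓞 K) K) ((b : 𝓞 K) * y) = (algebraMap (𝓞 K) K) (a : 𝓞 K) := by
    rw [h]
  rw [map_mul, map_intCast, map_intCast] at hK
  have hbK : (b : K) ≠ 0 := Int.cast_ne_zero.mpr hb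
  have key : algebraMap ℚ K ((a : ℚ) / (b : ℚ)) = algebraMap (𝓞 K) K y := by
    rw [map_div₀, map_intCast, map_intCast, div_eq_iff hbK, mul_comm]
    exact hK.symm
  have hint : IsIntegral ℤ ((a : ℚ) / (b : ℚ)) := by
    rw [← isIntegral_algebraMap_iff (algebraMap ℚ K).injective, key]
    exact RingOfIntegers.isIntegral_coe y
  obtain ⟨c, hc⟩ := IsIntegrallyClosed.isIntegral_iff.mp hint
  refine ⟨c, RingOfIntegers.coe_injective ?_⟩
  rw [map_intCast, ← key, ← hc]
  simp

lemma int_dvd_of_cast_mem (K : Type) [Field K] [NumberField K] {s : ℤ} {p : ℕ}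
    (hp : p ≠ 0) (h : ((s : ℤ) : 𝓞 K) ∈ Ideal.span {((p : ℕ) : 𝓞 K)}) : (p : ℤ) ∣ s := by
  obtain ⟨y, hy⟩ := Ideal.mem_span_singleton.mp h
  obtain ⟨c, hc⟩ := exists_int K (b := (p : ℤ)) (a := s)
    (by exact_mod_cast hp) (by push_cast at hy ⊢; rw [← hy])
  refine ⟨c, ?_⟩
  have : ((s : ℤ) : 𝓞 K) = (((p : ℤ) * c : ℤ) : 𝓞 K) := by push_cast at hy ⊢; rw [hy, hc]
  exact_mod_cast this

noncomputable instance torsionFintypeAux (K : Type) [Field K] [NumberField K] :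
    Fintype (NumberField.Units.torsion K) := Fintype.ofFinite _

lemma torsion_kill (K : Type) [Field K] [NumberField K] (t : (𝓞 K)ˣ) {p : ℕ}
    (hp : p.Prime) (hbig : Fintype.card (NumberField.Units.torsion K) < p)
    (h : t ^ p = 1) : t = 1 := by
  have hfin : IsOfFinOrder t := isOfFinOrder_iff_pow_eq_one.mpr ⟨p, hp.pos, h⟩
  have ht : t ∈ NumberField.Units.torsion K := hfin
  have hdvd : orderOf t ∣ p := orderOf_dvd_of_pow_eq_one h
  rcases (Nat.Prime.eq_one_or_self_of_dvd hp _ hdvd) with h1 | h1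
  · exact orderOf_eq_one_iff.mp h1
  · exfalso
    have : orderOf (⟨t, ht⟩ : NumberField.Units.torsion K) ∣
        Fintype.card (NumberField.Units.torsion K) := orderOf_dvd_card
    rw [Subgroup.orderOf_mk, h1] at this
    exact absurd (Nat.le_of_dvd Fintype.card_pos this) (by omega)

lemma local_cong (K : Type) [Field K] [NumberField K] (W : Subgroup (𝓞 K)ˣ)
    (u : (𝓞 K)ˣ) (huW : u ∈ W) (hord : ∀ k : ℕ, 0 < k → u ^ k ≠ 1)
    (hr : ∀ w ∈ W, ∃ m n : ℤ, m ≠ 0 ∧ w ^ m = u ^ n)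
    (x : 𝓞 K)
    (hx : ∀ ε ∈ W, ∃ δ ∈ W, ∃ v : 𝓞 K,
        ((δ : (𝓞 K)ˣ) : 𝓞 K) - 1
          = (((ε : (𝓞 K)ˣ) : 𝓞 K) - 1) * x + (((ε : (𝓞 K)ˣ) : 𝓞 K) - 1) ^ 2 * v)
    (p : ℕ) (hp : p.Prime)
    (hbig : Fintype.card (NumberField.Units.torsion K) < p) :
    ∃ c : ℤ, x - (c : 𝓞 K) ∈ Ideal.span {((p : ℕ) : 𝓞 K)} := by
  set I : Ideal (𝓞 K) := Ideal.span {((p : ℕ) : 𝓞 K)} with hI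
  have hpO : ((p : ℕ) : 𝓞 K) ≠ 0 := Nat.cast_ne_zero.mpr hp.pos.ne'
  have hpI : ((p : ℕ) : 𝓞 K) ∈ I := Ideal.subset_span rfl
  have hIbot : I ≠ ⊥ := by
    rw [hI, Ne, Ideal.span_singleton_eq_bot]
    exact hpO
  letI : Fintype (𝓞 K ⧸ I) := @Fintype.ofFinite _ (Ideal.finiteQuotientOfFreeOfNeBot I hIbot)
  haveI : Finite ((𝓞 K ⧸ I)ˣ) := inferInstance
  set q : 𝓞 K →* (𝓞 K ⧸ I) := (Ideal.Quotient.mk I).toMonoidHom with hq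
  set ub : ((𝓞 K ⧸ I))ˣ := Units.map q u with hub
  set T : ℕ := orderOf ub with hT
  have hTpos : 0 < T := orderOf_pos ub
  set ε : (𝓞 K)ˣ := u ^ T with hε
  have hεW : ε ∈ W := pow_mem huW T
  -- ε ≡ 1 mod I
  have hmkε : Ideal.Quotient.mk I ((ε : 𝓞 K)) = 1 := by
    have h1 : ub ^ T = 1 := pow_orderOf_eq_one ub
    have h2 := congrArg Units.val h1
    rw [Units.val_pow_eq_pow_val, Units.val_one] at h2
    rw [hε, Units.val_pow_eq_pow_val]
    exact h2
  have hεI : ((ε : 𝓞 K) : 𝓞 K) - 1 ∈ I := by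
    rw [← Ideal.Quotient.eq_zero_iff_mem, map_sub, hmkε, map_one, sub_self]
  have hεne : ((ε : 𝓞 K)) - 1 ≠ 0 := by
    intro hc
    apply hord T hTpos
    apply Units.ext
    rw [Units.val_pow_eq_pow_val, Units.val_one]
    simpa [hε, Units.val_pow_eq_pow_val] using sub_eq_zero.mp hc
  obtain ⟨δ, hδW, v, hv⟩ := hx ε hεW
  have hδI : ((δ : 𝓞 K)) - 1 ∈ I := by
    rw [hv]
    exact I.add_mem (I.mul_mem_right _ hεI)
      (I.mul_mem_right _ (Ideal.pow_mem_of_mem I hεI 2 two_pos))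
  obtain ⟨m, n, hm, hmn⟩ := hr δ hδW
  -- T divides n
  have hmkδm : Ideal.Quotient.mk I ((δ ^ m : (𝓞 K)ˣ) : 𝓞 K) = 1 := by
    obtain ⟨a, ha⟩ := key_int δ m
    have h3 : ((δ ^ m : (𝓞 K)ˣ) : 𝓞 K) - 1 ∈ I := by
      rw [ha]
      exact I.add_mem (I.mul_mem_left _ hδI)
        (I.mul_mem_right _ (Ideal.pow_mem_of_mem I hδI 2 two_pos))
    have := (Ideal.Quotient.eq_zero_iff_mem).mpr h3
    rw [map_sub, map_one, sub_eq_zero] at this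
    exact this
  have hubn : ub ^ (n : ℤ) = 1 := by
    have h4 : Units.map q (u ^ (n : ℤ)) = 1 := by
      apply Units.ext
      rw [← hmn]
      have : ((Units.map q) (δ ^ m) : 𝓞 K ⧸ I) = q ((δ ^ m : (𝓞 K)ˣ) : 𝓞 K) :=
        Units.coe_map _ _
      rw [this, Units.val_one]
      exact hmkδm
    rw [map_zpow] at h4
    exact h4
  have hTn : (T : ℤ) ∣ n := orderOf_dvd_iff_zpow_eq_one.mpr hubn
  obtain ⟨s, hs⟩ := hTn
  have hδε : δ ^ m = ε ^ s := by
    rw [hmn, hs, zpow_mul, hε, zpow_natCast]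
  -- the basic congruence
  set y : 𝓞 K := x + ((ε : 𝓞 K) - 1) * v with hy
  have hyδ : ((δ : 𝓞 K)) - 1 = ((ε : 𝓞 K) - 1) * y := by rw [hv, hy]; ring
  have keycong : ∀ m' s' : ℤ, δ ^ m' = ε ^ s' →
      (m' : 𝓞 K) * x - (s' : 𝓞 K) ∈ I := by
    intro m' s' h
    obtain ⟨a, ha⟩ := key_int δ m'
    obtain ⟨b, hb⟩ := key_int ε s'
    have hval : ((δ ^ m' : (𝓞 K)ˣ) : 𝓞 K) = ((ε ^ s' : (𝓞 K)ˣ) : 𝓞 K) :=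
      congrArg Units.val h
    have ha' : ((δ ^ m' : (𝓞 K)ˣ) : 𝓞 K) - 1
        = (m' : 𝓞 K) * (((ε : 𝓞 K) - 1) * y) + (((ε : 𝓞 K) - 1) * y) ^ 2 * a := by
      rw [← hyδ]; exact ha
    have h1 : ((ε : 𝓞 K) - 1) * ((m' : 𝓞 K) * y - (s' : 𝓞 K))
        = ((ε : 𝓞 K) - 1) ^ 2 * (b - y ^ 2 * a) := by
      linear_combination hb + hval - ha'
    have h2 : (m' : 𝓞 K) * y - (s' : 𝓞 K) = ((ε : 𝓞 K) - 1) * (b - y ^ 2 * a) := by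
      apply mul_left_cancel₀ hεne
      rw [h1]; ring
    have h3 : (m' : 𝓞 K) * x - (s' : 𝓞 K)
        = ((ε : 𝓞 K) - 1) * (b - y ^ 2 * a) - (m' : 𝓞 K) * (((ε : 𝓞 K) - 1) * v) := by
      rw [← h2, hy]; ring
    rw [h3]
    exact I.sub_mem (I.mul_mem_right _ hεI) (I.mul_mem_left _ (I.mul_mem_right _ hεI))
  -- strip powers of p
  have strip : ∀ N : ℕ, ∀ m' s' : ℤ, m'.natAbs ≤ N → m' ≠ 0 → δ ^ m' = ε ^ s' →
      ∃ c : ℤ, x - (c : 𝓞 K) ∈ I := by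
    intro N
    induction N with
    | zero =>
      intro m' s' hle hne _
      exact absurd (Int.natAbs_eq_zero.mp (Nat.le_zero.mp hle)) hne
    | succ N ih =>
      intro m' s' hle hne h
      by_cases hpm : (p : ℤ) ∣ m'
      · obtain ⟨m₁, hm₁⟩ := hpm
        have hsI : ((s' : ℤ) : 𝓞 K) ∈ I := by
          have h0 := keycong m' s' h
          have he : ((s' : ℤ) : 𝓞 K)
              = (m' : 𝓞 K) * x - ((m' : 𝓞 K) * x - (s' : 𝓞 K)) := by ring
          rw [he]
          refine I.sub_mem ?_ h0
          have : (m' : 𝓞 K) * x = ((p : ℕ) : 𝓞 K) * ((m₁ : 𝓞 K) * x) := by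
            rw [hm₁]; push_cast; ring
          rw [this]
          exact I.mul_mem_right _ hpI
        have hps : (p : ℤ) ∣ s' := int_dvd_of_cast_mem K hp.pos.ne' hsI
        obtain ⟨s₁, hs₁⟩ := hps
        have hm₁ne : m₁ ≠ 0 := by
          intro hc; apply hne; rw [hm₁, hc, mul_zero]
        have hδ1 : δ ^ m₁ = ε ^ s₁ := by
          have h' : (δ ^ m₁) ^ (p : ℕ) = (ε ^ s₁) ^ (p : ℕ) := by
            rw [← zpow_natCast (δ ^ m₁), ← zpow_natCast (ε ^ s₁), ← zpow_mul, ← zpow_mul]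
            rw [show m₁ * (p : ℤ) = m' by rw [hm₁]; ring,
              show s₁ * (p : ℤ) = s' by rw [hs₁]; ring]
            exact h
          have ht : (δ ^ m₁ * (ε ^ s₁)⁻¹) ^ (p : ℕ) = 1 := by
            rw [mul_pow, inv_pow, h', mul_inv_cancel]
          have := torsion_kill K _ hp hbig ht
          rwa [mul_inv_eq_one] at this
        refine ih m₁ s₁ ?_ hm₁ne hδ1
        have heq1 : m'.natAbs = p * m₁.natAbs := by
          rw [hm₁, Int.natAbs_mul, Int.natAbs_natCast]
        have hp2 : 2 ≤ p := hp.two_le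
        have h1 : 1 ≤ m₁.natAbs := Nat.one_le_iff_ne_zero.mpr (Int.natAbs_ne_zero.mpr hm₁ne)
        have h2 : 2 * m₁.natAbs ≤ p * m₁.natAbs := Nat.mul_le_mul_right _ hp.two_le
        omega
      · -- p does not divide m'
        have hpZ : Prime (p : ℤ) := Nat.prime_iff_prime_int.mp hp
        have hcop : IsCoprime (m' : ℤ) (p : ℤ) :=
          ((Prime.coprime_iff_not_dvd hpZ).mpr hpm).symm
        obtain ⟨a, b, hab⟩ := hcop
        refine ⟨a * s', ?_⟩
        have hab' : (a : 𝓞 K) * (m' : 𝓞 K) + (b : 𝓞 K) * ((p : ℕ) : 𝓞 K) = 1 := by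
          have := congrArg (fun z : ℤ => (z : 𝓞 K)) hab
          push_cast at this
          push_cast
          exact this
        have hxe : x - ((a * s' : ℤ) : 𝓞 K)
            = (a : 𝓞 K) * ((m' : 𝓞 K) * x - (s' : 𝓞 K))
              + ((p : ℕ) : 𝓞 K) * ((b : 𝓞 K) * x) := by
          push_cast
          linear_combination (-x) * hab'
        rw [hxe]
        exact I.add_mem (I.mul_mem_left _ (keycong m' s' h)) (I.mul_mem_right _ hpI)
  exact strip m.natAbs m s le_rfl hm hδε

theorem stmt9 (K : Type) [Field K] [NumberField K] (W : Subgroup (𝓞 K)ˣ)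
    (hrank : ∃ u ∈ W, (∀ k : ℕ, 0 < k → u ^ k ≠ 1) ∧
      ∀ w ∈ W, ∃ (m n : ℤ), m ≠ 0 ∧ w ^ m = u ^ n) :
    {x : 𝓞 K | ∀ ε ∈ W, ∃ δ ∈ W, ∃ v : 𝓞 K,
        ((δ : (𝓞 K)ˣ) : 𝓞 K) - 1
          = (((ε : (𝓞 K)ˣ) : 𝓞 K) - 1) * x + (((ε : (𝓞 K)ˣ) : 𝓞 K) - 1) ^ 2 * v}
      = Set.range (Int.cast : ℤ → 𝓞 K) := by
  obtain ⟨u, huW, hord, hr⟩ := hrank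
  ext x
  simp only [Set.mem_setOf_eq, Set.mem_range]
  constructor
  · intro hx
    set d : ℕ := Module.finrank ℤ (𝓞 K) with hd
    set tr : 𝓞 K →ₗ[ℤ] ℤ := Algebra.trace ℤ (𝓞 K) with htr
    set z : 𝓞 K := (d : 𝓞 K) * x - ((tr x : ℤ) : 𝓞 K) with hz
    have hzmem : ∀ p : ℕ, p.Prime → Fintype.card (NumberField.Units.torsion K) < p →
        z ∈ Ideal.span {((p : ℕ) : 𝓞 K)} := by
      intro p hp hbig
      obtain ⟨c, hc⟩ := local_cong K W u huW hord hr x hx p hp hbig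
      obtain ⟨y, hy⟩ := Ideal.mem_span_singleton.mp hc
      have htrc : tr ((c : ℤ) : 𝓞 K) = c * d := by
        have h1 : ((c : ℤ) : 𝓞 K) = algebraMap ℤ (𝓞 K) c := by
          rw [algebraMap_int_eq]; rfl
        rw [htr, h1, Algebra.trace_algebraMap]
        rw [nsmul_eq_mul]
        push_cast [hd]
        ring
      have htr2 : tr x - c * d = p * tr y := by
        have h2 : tr (x - ((c : ℤ) : 𝓞 K)) = tr x - c * d := by rw [map_sub, htrc]
        have h3 : tr (((p : ℕ) : 𝓞 K) * y) = p * tr y := by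
          have h4 : ((p : ℕ) : 𝓞 K) * y = ((p : ℕ) : ℤ) • y := by
            rw [zsmul_eq_mul]; push_cast; ring
          rw [h4, map_smul, zsmul_eq_mul]; push_cast; ring
        rw [← h2, hy, h3]
      have hzeq : z = ((p : ℕ) : 𝓞 K) * ((d : 𝓞 K) * y - ((tr y : ℤ) : 𝓞 K)) := by
        have hy' : x - ((c : ℤ) : 𝓞 K) = ((p : ℕ) : 𝓞 K) * y := hy
        have htr2' : ((tr x : ℤ) : 𝓞 K) - ((c : ℤ) : 𝓞 K) * (d : 𝓞 K)
            = ((p : ℕ) : 𝓞 K) * ((tr y : ℤ) : 𝓞 K) := by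
          have := congrArg (fun t : ℤ => (t : 𝓞 K)) htr2
          push_cast at this
          push_cast
          linear_combination this
        rw [hz]
        linear_combination (d : 𝓞 K) * hy' - htr2'
      rw [hzeq]
      exact Ideal.mul_mem_right _ _ (Ideal.subset_span rfl)
    -- z = 0 via coordinates
    have hz0 : z = 0 := by
      let B := Module.Free.chooseBasis ℤ (𝓞 K)
      have hcoord : ∀ i, B.repr z i = 0 := by
        intro i
        by_contra hne
        obtain ⟨p, hple, hp⟩ := Nat.exists_infinite_primes
          (max (Fintype.card (NumberField.Units.torsion K)) (B.repr z i).natAbs + 1)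
        obtain ⟨y, hy⟩ := Ideal.mem_span_singleton.mp
          (hzmem p hp (by omega))
        have hrep : B.repr z i = (p : ℤ) * B.repr y i := by
          have h4 : z = ((p : ℕ) : ℤ) • y := by rw [hy, zsmul_eq_mul]; push_cast; ring
          rw [h4, map_smul, Finsupp.smul_apply, zsmul_eq_mul]
          push_cast
          ring
        have hdvd : (p : ℤ) ∣ B.repr z i := ⟨_, hrep⟩
        have hdvd2 : p ∣ (B.repr z i).natAbs := by
          have := Int.natAbs_dvd_natAbs.mpr hdvd
          simpa using this
        have := Nat.le_of_dvd (Nat.pos_of_ne_zero (Int.natAbs_ne_zero.mpr hne)) hdvd2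
        omega
      have : B.repr z = 0 := Finsupp.ext hcoord
      have h5 : B.repr z = B.repr 0 := by rw [this, map_zero]
      exact B.repr.injective h5
    have hd0 : (d : ℤ) ≠ 0 := by
      have : 0 < d := Module.finrank_pos
      omega
    have hfin : ((d : ℤ) : 𝓞 K) * x = ((tr x : ℤ) : 𝓞 K) := by
      have := sub_eq_zero.mp hz0
      push_cast at this ⊢
      exact this
    exact exists_int K hd0 hfin
  · rintro ⟨c, rfl⟩ ε hε
    obtain ⟨w, hw⟩ := key_int ε c
    refine ⟨ε ^ c, zpow_mem hε c, w, ?_⟩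
    rw [hw]
    push_cast
    ring
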